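/- Let X be a non-wasteful allocation and R = (R_1,...,R_k) a partition of the agents with representatives r_ℓ = argmin_{j∈R_ℓ} v_j(X_j), sorted so that v_{r_1}(X_{r_1}) ≤ ... ≤ v_{r_k}(X_{r_k}). Suppose (1) for every ℓ, every i ∈ R_ℓ and every g ∈ X_i, v_i(X_i \ {g}) ≤ v_{r_ℓ}(X_{r_ℓ}) (envy-compatibility), and (2) for all i ∈ R_ℓ and j ∈ R_m with ℓ < m, v_{r_ℓ}(X_{r_ℓ}) ≥ v_i(X_j). Then X is EFX. -/
import Mathlib


open Finset

/-- If `X` is non-wasteful and `(X, R)` is an envy-compatible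
configuration (with representatives sorted by value) in which there is no
regular edge from an earlier group to a later group, then `X` is EFX. -/
theorem stmt_2 (A G : Type) [DecidableEq A] [DecidableEq G]
    (v : A → G → ℝ) (w : G → ℝ) (hw : ∀ x, 0 < w x)
    (hres : ∀ a x, v a x = 0 ∨ v a x = w x)
    (X : A → Finset G)
    (k : ℕ) (R : Fin k → Finset A)
    (hne : ∀ ℓ, (R ℓ).Nonempty)
    (hdisj : Pairwise fun ℓ m => Disjoint (R ℓ) (R m))
    (hcover : ∀ a : A, ∃ ℓ, a ∈ R ℓ)
    (r : Fin k → A) (hrmem : ∀ ℓ, r ℓ ∈ R ℓ)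
    (hrmin : ∀ ℓ, ∀ a ∈ R ℓ, ∑ x ∈ X (r ℓ), v (r ℓ) x ≤ ∑ x ∈ X a, v a x)
    (hsorted : ∀ ℓ m : Fin k, ℓ ≤ m →
      ∑ x ∈ X (r ℓ), v (r ℓ) x ≤ ∑ x ∈ X (r m), v (r m) x)
    (hnonwaste : ∀ a, ∀ x ∈ X a, v a x = w x)
    -- (1) envy-compatibility
    (hcompat : ∀ ℓ, ∀ a ∈ R ℓ, ∀ x ∈ X a,
      ∑ y ∈ (X a).erase x, v a y ≤ ∑ y ∈ X (r ℓ), v (r ℓ) y)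
    -- (2) no regular edge from an earlier group to a later group
    (hnoedge : ∀ ℓ m : Fin k, ℓ < m → ∀ a ∈ R ℓ, ∀ b ∈ R m,
      ∑ x ∈ X b, v a x ≤ ∑ x ∈ X (r ℓ), v (r ℓ) x) :
    -- X is EFX
    ∀ a b : A, a ≠ b → ∀ x ∈ X b,
      ∑ y ∈ (X b).erase x, v a y ≤ ∑ y ∈ X a, v a y := by
  intro a b hab x hx
  obtain ⟨ℓ, haℓ⟩ := hcover a
  obtain ⟨m, hbm⟩ := hcover b
  have hnn : ∀ c y, 0 ≤ v c y := by
    intro c y; rcases hres c y with h | h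
    · simp [h]
    · exact h ▸ (hw y).le
  have h1 : ∑ y ∈ (X b).erase x, v a y ≤ ∑ y ∈ (X b).erase x, v b y := by
    apply Finset.sum_le_sum
    intro y hy
    have hyb := Finset.mem_of_mem_erase hy
    rw [hnonwaste b y hyb]
    rcases hres a y with h | h
    · exact h ▸ (hw y).le
    · exact h.le
  rcases lt_or_ge ℓ m with hlt | hle
  · -- hnoedge case
    have h2 := hnoedge ℓ m hlt a haℓ b hbm
    have h3 : ∑ y ∈ (X b).erase x, v a y ≤ ∑ y ∈ X b, v a y :=
      Finset.sum_le_sum_of_subset_of_nonneg (Finset.erase_subset _ _)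
        (fun y _ _ => hnn a y)
    exact h3.trans (h2.trans (hrmin ℓ a haℓ))
  · have h2 := hcompat m b hbm x hx
    have h3 := hsorted m ℓ hle
    exact h1.trans (h2.trans (h3.trans (hrmin ℓ a haℓ)))
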